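/- Let X be a convex subset of a real vector space and ≿ a complete, transitive, continuous relation on X (all upper and lower contour sets closed, where X carries the topology induced from a topological vector space) satisfying betweenness. Then indifference is preserved under mixing: if x ∼ y, then x ∼ λx + (1−λ)y for every λ ∈ (0,1), provided there exists z ∈ X with y ≻ z or z ≻ x. -/

import Mathlib

open Set

theorem indifference_mixing
    {E : Type*} [AddCommGroup E] [Module ℝ E] [TopologicalSpace E]
    [IsTopologicalAddGroup E] [ContinuousSMul ℝ E]
    (X : Set E) (hXconv : Convex ℝ X)
    (r : E → E → Prop)
    (hcomp : ∀ x ∈ X, ∀ y ∈ X, r x y ∨ r y x)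
    (htrans : ∀ x ∈ X, ∀ y ∈ X, ∀ z ∈ X, r x y → r y z → r x z)
    (hclosed : ∀ y ∈ X, IsClosed {x ∈ X | r x y} ∧ IsClosed {x ∈ X | r y x})
    (hbet : ∀ x ∈ X, ∀ y ∈ X, ∀ l ∈ Ioo (0:ℝ) 1,
      (r x y ∧ ¬ r y x) →
        ((r x (l • x + (1 - l) • y) ∧ ¬ r (l • x + (1 - l) • y) x) ∧
         (r (l • x + (1 - l) • y) y ∧ ¬ r y (l • x + (1 - l) • y)))) :
    ∀ x ∈ X, ∀ y ∈ X, (r x y ∧ r y x) →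
      (∃ z ∈ X, (r y z ∧ ¬ r z y) ∨ (r z x ∧ ¬ r x z)) →
      ∀ l ∈ Ioo (0:ℝ) 1,
        r x (l • x + (1 - l) • y) ∧ r (l • x + (1 - l) • y) x := by
  intro x hx y hy hxy' _hz l hl
  obtain ⟨hxy, hyx⟩ := hxy'
  obtain ⟨hl0, hl1⟩ := hl
  set m := l • x + (1 - l) • y with hm_def
  have hmX : m ∈ X := hXconv hx hy hl0.le (by linarith) (by ring)
  have hs2 : ((2 : ℝ) * l / (1 + l)) ∈ Ioo (0:ℝ) 1 := by
    constructor
    · positivity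
    · rw [div_lt_one (by linarith)]; linarith
  have hs3 : ((1 - l) / (1 + l) : ℝ) ∈ Ioo (0:ℝ) 1 := by
    constructor
    · exact div_pos (by linarith) (by linarith)
    · rw [div_lt_one (by linarith)]; linarith
  constructor
  · -- r x m
    by_contra hxm
    have hmx : r m x := (hcomp x hx m hmX).resolve_left hxm
    -- so m ≻ x, hence m ≻ y
    have hb1 := hbet m hmX x hx (1/2) (by norm_num) ⟨hmx, hxm⟩
    set q := (1/2 : ℝ) • m + (1 - 1/2 : ℝ) • x with hq_def
    have hqX : q ∈ X := hXconv hmX hx (by norm_num) (by norm_num) (by norm_num)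
    obtain ⟨⟨hmq, hnqm⟩, hqx, hnxq⟩ := hb1
    have hqy : r q y := htrans q hqX x hx y hy hqx hxy
    have hnyq : ¬ r y q := fun h => hnxq (htrans x hx y hy q hqX hxy h)
    have hb2 := hbet q hqX y hy (2 * l / (1 + l)) hs2 ⟨hqy, hnyq⟩
    have key : (2 * l / (1 + l)) • q + (1 - 2 * l / (1 + l)) • y = m := by
      rw [hq_def, hm_def]
      match_scalars <;> field_simp <;> ring
    rw [key] at hb2
    exact hb2.1.2 hmq
  · -- r m x
    by_contra hmx
    have hxm : r x m := (hcomp x hx m hmX).resolve_right hmx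
    have hb1 := hbet x hx m hmX (1/2) (by norm_num) ⟨hxm, hmx⟩
    set p := (1/2 : ℝ) • x + (1 - 1/2 : ℝ) • m with hp_def
    have hpX : p ∈ X := hXconv hx hmX (by norm_num) (by norm_num) (by norm_num)
    obtain ⟨⟨hxp, hnpx⟩, hpm, hnmp⟩ := hb1
    have hyp : r y p := htrans y hy x hx p hpX hyx hxp
    have hnpy : ¬ r p y := fun h => hnpx (htrans p hpX y hy x hx h hyx)
    have hb2 := hbet y hy p hpX ((1 - l) / (1 + l)) hs3 ⟨hyp, hnpy⟩
    have key : ((1 - l) / (1 + l)) • y + (1 - (1 - l) / (1 + l)) • p = m := by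
      rw [hp_def, hm_def]
      match_scalars <;> field_simp <;> ring
    rw [key] at hb2
    exact hnmp hb2.2.1
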